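/- Let n ≥ 1, let C > 0, set σ = −1/C², and let b ∈ ℝⁿ be nonzero with u = b/‖b‖ and θ = ‖b‖/C. Then the matrix exponential exp([[0, b], [σ·bᵀ, 0]]) equals [[Iₙ − u·uᵀ + cos(θ)·u·uᵀ, sin(θ)·C·u], [−sin(θ)·uᵀ/C, cos(θ)]]. -/

import Mathlib

open Matrix

noncomputable section

abbrev Idx (n : ℕ) := Fin n ⊕ Unit

open Nat in
lemma exp_key {n : ℕ} (M P : Matrix (Idx n) (Idx n) ℝ) (θ : ℝ) (hθ : θ ≠ 0)
    (h2 : M ^ 2 = (-θ ^ 2) • P) (hMP : M * P = M) :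
    NormedSpace.exp M = (1 - P) + Real.cos θ • P + (Real.sin θ / θ) • M := by
  have h3 : M ^ 3 = (-θ ^ 2) • M := by
    rw [show M ^ 3 = M * M ^ 2 from _root_.pow_succ' M 2, h2, mul_smul_comm, hMP]
  have hpow : ∀ k, M ^ (k + 3) = (-θ ^ 2) • M ^ (k + 1) := by
    intro k
    rw [_root_.pow_add, h3, mul_smul_comm, ← _root_.pow_succ]
  have hodd : ∀ k, M ^ (2 * k + 1) = ((-θ ^ 2) ^ k) • M := by
    intro k
    induction k with
    | zero => simp
    | succ j ih =>
      rw [show 2 * (j + 1) + 1 = (2 * j) + 3 by ring, hpow, ih, smul_smul,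
        ← _root_.pow_succ']
  have heven : ∀ k, M ^ (2 * k + 2) = ((-θ ^ 2) ^ k) • M ^ 2 := by
    intro k
    induction k with
    | zero => simp
    | succ j ih =>
      rw [show 2 * (j + 1) + 2 = (2 * j + 1) + 3 by ring, hpow,
        show 2 * j + 1 + 1 = 2 * j + 2 by ring, ih, smul_smul, ← _root_.pow_succ']
  have hcos := (Real.hasSum_cos θ).smul_const P
  have hone : HasSum (fun k : ℕ => if k = 0 then (1 : Matrix (Idx n) (Idx n) ℝ) - P else 0)
      (1 - P) := hasSum_ite_eq 0 _
  have heq : HasSum (fun k : ℕ => ((2 * k)! : ℝ)⁻¹ • M ^ (2 * k))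
      (Real.cos θ • P + (1 - P)) := by
    convert hcos.add hone using 1
    funext k
    rcases k with _ | j
    · simp
    · rw [if_neg (Nat.succ_ne_zero j), add_zero,
        show 2 * (j + 1) = 2 * j + 2 by ring, heven j, h2, smul_smul, smul_smul]
      congr 1
      have hneg : ((-θ ^ 2 : ℝ)) ^ j = (-1) ^ j * θ ^ (2 * j) := by
        rw [show ((-θ ^ 2 : ℝ) = (-1) * θ ^ 2) by ring, _root_.mul_pow, _root_.pow_mul]
      rw [hneg, _root_.pow_succ (-1 : ℝ) j, _root_.pow_add θ (2 * j) 2,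
        div_eq_mul_inv]
      ring
  have hsin := ((Real.hasSum_sin θ).div_const θ).smul_const M
  have hoddsum : HasSum (fun k : ℕ => ((2 * k + 1)! : ℝ)⁻¹ • M ^ (2 * k + 1))
      ((Real.sin θ / θ) • M) := by
    convert hsin using 1
    funext k
    rw [hodd k, smul_smul]
    congr 1
    have hneg : ((-θ ^ 2 : ℝ)) ^ k = (-1) ^ k * θ ^ (2 * k) := by
      rw [show ((-θ ^ 2 : ℝ) = (-1) * θ ^ 2) by ring, _root_.mul_pow, _root_.pow_mul]
    rw [hneg, _root_.pow_succ θ (2 * k)]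
    have hfac : ((2 * k + 1)! : ℝ) ≠ 0 := Nat.cast_ne_zero.mpr (Nat.factorial_ne_zero _)
    field_simp
    try ring
  have hfull : HasSum (fun k : ℕ => (k ! : ℝ)⁻¹ • M ^ k)
      ((Real.cos θ • P + (1 - P)) + (Real.sin θ / θ) • M) :=
    HasSum.even_add_odd heq hoddsum
  rw [NormedSpace.exp_eq_tsum ℝ]
  show (∑' k : ℕ, (k ! : ℝ)⁻¹ • M ^ k) = _
  rw [hfull.tsum_eq, add_comm (Real.cos θ • P) (1 - P)]

theorem stmt16 (n : ℕ) (hn : 1 ≤ n) (C : ℝ) (hC : 0 < C) (σ : ℝ)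
    (hσ : σ = -1 / C ^ 2) (b : Fin n → ℝ) (hb : b ≠ 0)
    (nb : ℝ) (hnb : nb = Real.sqrt (∑ i, b i ^ 2))
    (u : Fin n → ℝ) (hu : u = nb⁻¹ • b)
    (θ : ℝ) (hθ : θ = nb / C) :
    NormedSpace.exp (fromBlocks 0 (replicateCol Unit b) (σ • replicateRow Unit b) 0) =
      fromBlocks
        ((1 : Matrix (Fin n) (Fin n) ℝ) - vecMulVec u u +
          Real.cos θ • vecMulVec u u)
        ((Real.sin θ * C) • replicateCol Unit u)
        ((-(Real.sin θ / C)) • replicateRow Unit u)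
        (Real.cos θ • (1 : Matrix Unit Unit ℝ)) := by
  have hCne : C ≠ 0 := ne_of_gt hC
  have hsum_pos : 0 < ∑ i, b i ^ 2 := by
    obtain ⟨i, hi⟩ : ∃ i, b i ≠ 0 := Function.ne_iff.mp hb
    exact Finset.sum_pos' (fun j _ => sq_nonneg _)
      ⟨i, Finset.mem_univ i, by positivity⟩
  have hnb_pos : 0 < nb := hnb ▸ Real.sqrt_pos.mpr hsum_pos
  have hnbne : nb ≠ 0 := ne_of_gt hnb_pos
  have hbb : ∑ i, b i ^ 2 = nb ^ 2 := by
    rw [hnb, Real.sq_sqrt (le_of_lt hsum_pos)]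
  have hθne : θ ≠ 0 := by rw [hθ]; positivity
  set M : Matrix (Idx n) (Idx n) ℝ := fromBlocks 0 (replicateCol Unit b) (σ • replicateRow Unit b) 0 with hM
  set P : Matrix (Idx n) (Idx n) ℝ := fromBlocks (vecMulVec u u) 0 0 1 with hP
  have hbdot : ∀ j, (∑ i, b i * (u i * u j)) = b j := by
    intro j
    have h1 : ∀ i, b i * (u i * u j) = (nb⁻¹ * nb⁻¹ * b j) * b i ^ 2 := by
      intro i; rw [hu]; simp only [Pi.smul_apply, smul_eq_mul]; ring
    rw [Finset.sum_congr rfl fun i _ => h1 i, ← Finset.mul_sum, hbb,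
      show nb⁻¹ * nb⁻¹ * b j * nb ^ 2 = (nb * nb⁻¹) * (nb * nb⁻¹) * b j by ring,
      mul_inv_cancel₀ hnbne]
    ring
  have h2 : M ^ 2 = (-θ ^ 2) • P := by
    rw [hM, hP, pow_two, fromBlocks_multiply, fromBlocks_smul, fromBlocks_inj]
    refine ⟨?_, by simp, by simp, ?_⟩
    · ext i j
      simp only [Matrix.mul_apply, Matrix.add_apply, Matrix.zero_apply,
        Matrix.smul_apply, Matrix.replicateCol_apply, Matrix.replicateRow_apply, smul_eq_mul,
        vecMulVec_apply, Matrix.zero_mul, Matrix.mul_zero, zero_add, add_zero,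
        Fintype.sum_unique]
      rw [hσ, hθ, hu]
      simp only [Pi.smul_apply, smul_eq_mul]
      field_simp
      try ring
    · ext i j
      have h1 : (∑ k, σ * b k * b k) = σ * nb ^ 2 := by
        rw [← hbb, Finset.mul_sum]
        exact Finset.sum_congr rfl fun k _ => by ring
      simp only [Matrix.mul_apply, Matrix.add_apply, Matrix.zero_apply,
        Matrix.smul_apply, Matrix.replicateCol_apply, Matrix.replicateRow_apply, smul_eq_mul,
        Matrix.zero_mul, Matrix.mul_zero, add_zero, zero_add,
        Subsingleton.elim i j, Matrix.one_apply_eq]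
      rw [h1, hσ, hθ]
      ring
  have hMP : M * P = M := by
    rw [hM, hP, fromBlocks_multiply, fromBlocks_inj]
    refine ⟨by simp, by simp, ?_, by simp⟩
    ext i j
    simp only [Matrix.add_apply, Matrix.mul_apply, Matrix.smul_apply,
      Matrix.replicateRow_apply, vecMulVec_apply, smul_eq_mul, Matrix.zero_apply,
      Matrix.zero_mul, Matrix.mul_zero, add_zero]
    rw [show (∑ k, σ * b k * (u k * u j)) = σ * ∑ k, b k * (u k * u j) by
      rw [Finset.mul_sum]; exact Finset.sum_congr rfl fun k _ => by ring, hbdot]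
  have hexp := exp_key M P θ hθne h2 hMP
  rw [hexp, hP]
  ext i j
  rcases i with i | i <;> rcases j with j | j <;>
    simp only [Matrix.add_apply, Matrix.sub_apply, Matrix.smul_apply,
      fromBlocks_apply₁₁, fromBlocks_apply₁₂, fromBlocks_apply₂₁, fromBlocks_apply₂₂,
      Matrix.one_apply, Matrix.zero_apply, vecMulVec_apply, Matrix.replicateCol_apply,
      Matrix.replicateRow_apply, smul_eq_mul, Sum.inl.injEq, Sum.inr.injEq, reduceCtorEq,
      if_false, ite_false, hM]
  · ring
  · rw [hθ, hu]
    simp only [Pi.smul_apply, smul_eq_mul]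
    field_simp
    try ring
  · rw [hθ, hσ, hu]
    simp only [Pi.smul_apply, smul_eq_mul]
    field_simp
    try ring
  · simp
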